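/- arXiv:math/0301153 — 3 statements merged into one kernel-verified Lean document; each statement's English description precedes it below -/
import Mathlib

section
/- Let k, l be positive integers and set φ(1) = l + 2k, φ(2) = l + k, φ(3) = l. For j ∈ ℕ define a₁ = (j − φ(1) + 1)₊, a₆ = (j − 2φ(2) + 1)₊, a₇ = (j − 3φ(3) + 1)₊ (where (a)₊ = max{a,0}). Then j − a₁ − a₆ − a₇ < 0 if and only if j ≥ 2φ(2) + φ(3) − 1. -/
theorem Dj_meets_C167_negatively_iff
    (k l : ℤ) (hk : 0 < k) (hl : 0 < l) (j : ℤ) (hj : 0 ≤ j)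
    (φ1 φ2 φ3 a1 a6 a7 : ℤ)
    (hφ1 : φ1 = l + 2 * k) (hφ2 : φ2 = l + k) (hφ3 : φ3 = l)
    (ha1 : a1 = max (j - φ1 + 1) 0)
    (ha6 : a6 = max (j - 2 * φ2 + 1) 0)
    (ha7 : a7 = max (j - 3 * φ3 + 1) 0) :
    j - a1 - a6 - a7 < 0 ↔ 2 * φ2 + φ3 - 1 ≤ j := by subst hφ1 hφ2 hφ3 ha1 ha6 ha7; omega
end

section
/- Let k, l be positive integers, φ(1) = l + 2k, φ(2) = l + k, φ(3) = l, and let 0 ≤ j < 3l + 3k − 2. Define a₁ = (j−φ(1)+1)₊, a₄ = (j−2φ(2)+1)₊, a₇ = (j−3φ(3)+1)₊, t₁ = (j−φ(1)−φ(2)+2)₊, t₂ = (j−2φ(2)−φ(3)+2)₊, where (a)₊ = max{a,0}. Then the following five quantities are all nonnegative: (i) j − t₁ − t₂ − 2a₄, (ii) a₁ − 2t₁ − t₂, (iii) a₄ − t₁ − t₂, (iv) a₇ − 3t₂, (v) j − 3t₁ − 3t₂. -/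
theorem reduced_divisor_is_nef
    (k l : ℤ) (hk : 0 < k) (hl : 0 < l) (j : ℤ)
    (hj0 : 0 ≤ j) (hj : j < 3 * l + 3 * k - 2)
    (φ1 φ2 φ3 a1 a4 a7 t1 t2 : ℤ)
    (hφ1 : φ1 = l + 2 * k) (hφ2 : φ2 = l + k) (hφ3 : φ3 = l)
    (ha1 : a1 = max (j - φ1 + 1) 0)
    (ha4 : a4 = max (j - 2 * φ2 + 1) 0)
    (ha7 : a7 = max (j - 3 * φ3 + 1) 0)
    (ht1 : t1 = max (j - φ1 - φ2 + 2) 0)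
    (ht2 : t2 = max (j - 2 * φ2 - φ3 + 2) 0) :
    0 ≤ j - t1 - t2 - 2 * a4 ∧
    0 ≤ a1 - 2 * t1 - t2 ∧
    0 ≤ a4 - t1 - t2 ∧
    0 ≤ a7 - 3 * t2 ∧
    0 ≤ j - 3 * t1 - 3 * t2 := by subst hφ1 hφ2 hφ3 ha1 ha4 ha7 ht1 ht2; omega
end

section
/- Let k, l be positive integers, φ(1) = l+2k, φ(2) = l+k, φ(3) = l, and define h : ℕ → ℤ by h(j) = C(j+2,2) − 3·C(j+2−φ(1),2) − 3·C(j+2−2φ(2),2) − C(j+2−3φ(3),2) + 6·C(j+2−φ(1)−φ(2),2) + 6·C(j+2−2φ(2)−φ(3),2) − 6·C(j+2−φ(1)−φ(2)−φ(3),2), where C(n,2) = n(n−1)/2 for n ≥ 0 and C(n,2) = 0 for n < 0. Then: (a) h(j) ≥ 0 for all j, and (b) h(j) = 0 for all j ≥ φ(1)+φ(2)+φ(3)−2, so that ∑_{j≥0} h(j) t^j = (1 − 3t^{φ(1)} − 3t^{2φ(2)} − t^{3φ(3)} + 6t^{φ(1)+φ(2)} + 6t^{2φ(2)+φ(3)}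 − 6t^{φ(1)+φ(2)+φ(3)})/(1−t)³ as formal power series. -/
/-- C(n,2) = n(n−1)/2 for n ≥ 0 and 0 for n < 0. -/
def C2 (n : ℤ) : ℤ := if 0 ≤ n then n * (n - 1) / 2 else 0

open PowerSeries

lemma two_C2_of_nonneg {x : ℤ} (hx : 0 ≤ x) : 2 * C2 x = x * (x - 1) := by
  rw [C2, if_pos hx]
  refine Int.mul_ediv_cancel' ?_
  have h := Int.even_mul_succ_self (x - 1)
  have : (x - 1) * (x - 1 + 1) = x * (x - 1) := by ring
  rw [this] at h
  exact h.two_dvd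

lemma C2_of_neg {x : ℤ} (hx : x < 0) : C2 x = 0 := if_neg (not_le.mpr hx)

lemma C2_cases (x : ℤ) : (0 ≤ x ∧ 2 * C2 x = x * (x - 1)) ∨ (x < 0 ∧ C2 x = 0) := by
  rcases le_or_gt 0 x with h | h
  · exact Or.inl ⟨h, two_C2_of_nonneg h⟩
  · exact Or.inr ⟨h, C2_of_neg h⟩

lemma C2_of_le_one {x : ℤ} (hx : x ≤ 1) : C2 x = 0 := by
  rw [C2]
  split_ifs with h
  · have : x = 0 ∨ x = 1 := by omega
    rcases this with rfl | rfl <;> norm_num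
  · rfl

lemma C2_add_two (n : ℕ) : C2 ((n : ℤ) + 2) = ((2 + n).choose 2 : ℤ) := by
  have hnat : 2 * ((2 + n).choose 2) = (2 + n) * (1 + n) := by
    induction n with
    | zero => rfl
    | succ n ih =>
        have : 2 + (n + 1) = (2 + n) + 1 := by omega
        rw [this, Nat.choose_succ_succ, Nat.mul_add, ih]
        have : (2 + n).choose 1 = 2 + n := Nat.choose_one_right _
        rw [this]; ring
  have h1 : 2 * C2 ((n : ℤ) + 2) = ((n : ℤ) + 2) * ((n : ℤ) + 1) := by
    rw [two_C2_of_nonneg (by positivity)]; ring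
  have h2 : (2 : ℤ) * ((2 + n).choose 2 : ℤ) = ((n : ℤ) + 2) * ((n : ℤ) + 1) := by
    have := congrArg (fun t : ℕ => (t : ℤ)) hnat
    push_cast at this
    linarith
  omega

lemma G_mul (a : ℕ) :
    (mk fun j : ℕ => C2 ((j : ℤ) + 2 - a)) * (1 - X) ^ 3 = (X : PowerSeries ℤ) ^ a := by
  have base : (mk fun n : ℕ => ((2 + n).choose 2 : ℤ)) * (1 - X) ^ 3 = 1 := by
    simpa using mk_add_choose_mul_one_sub_pow_eq_one ℤ 2
  have shift : (mk fun j : ℕ => C2 ((j : ℤ) + 2 - a))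
      = X ^ a * mk fun n : ℕ => ((2 + n).choose 2 : ℤ) := by
    ext j
    rw [coeff_mk, coeff_X_pow_mul']
    split_ifs with hja
    · rw [coeff_mk, ← C2_add_two]
      congr 1
      have : (a : ℤ) ≤ (j : ℤ) := by exact_mod_cast hja
      push_cast [hja]
      ring
    · refine C2_of_le_one ?_
      have : (j : ℤ) < a := by exact_mod_cast not_le.mp hja
      linarith
  rw [shift, mul_assoc, base, mul_one]

lemma key_zero (K L M : ℤ) (hK : 1 ≤ K) (hL : 1 ≤ L) (hM : 3 * L + 3 * K ≤ M) :
    C2 M - 3 * C2 (M - (L + 2 * K)) - 3 * C2 (M - 2 * (L + K)) - C2 (M - 3 * L)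
      + 6 * C2 (M - (L + 2 * K) - (L + K)) + 6 * C2 (M - 2 * (L + K) - L)
      - 6 * C2 (M - (L + 2 * K) - (L + K) - L) = 0 := by
  have e0 := two_C2_of_nonneg (show (0:ℤ) ≤ M by linarith)
  have e1 := two_C2_of_nonneg (show (0:ℤ) ≤ M - (L + 2 * K) by linarith)
  have e2 := two_C2_of_nonneg (show (0:ℤ) ≤ M - 2 * (L + K) by linarith)
  have e3 := two_C2_of_nonneg (show (0:ℤ) ≤ M - 3 * L by linarith)
  have e4 := two_C2_of_nonneg (show (0:ℤ) ≤ M - (L + 2 * K) - (L + K) by linarith)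
  have e5 := two_C2_of_nonneg (show (0:ℤ) ≤ M - 2 * (L + K) - L by linarith)
  have e6 := two_C2_of_nonneg (show (0:ℤ) ≤ M - (L + 2 * K) - (L + K) - L by linarith)
  have h2 : 2 * (C2 M - 3 * C2 (M - (L + 2 * K)) - 3 * C2 (M - 2 * (L + K)) - C2 (M - 3 * L)
      + 6 * C2 (M - (L + 2 * K) - (L + K)) + 6 * C2 (M - 2 * (L + K) - L)
      - 6 * C2 (M - (L + 2 * K) - (L + K) - L)) = 0 := by
    linear_combination e0 - 3 * e1 - 3 * e2 - e3 + 6 * e4 + 6 * e5 - 6 * e6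
  linarith

set_option maxHeartbeats 800000 in
lemma key_nonneg (K L M : ℤ) (hK : 1 ≤ K) (hL : 1 ≤ L) (hM : 2 ≤ M) :
    0 ≤ C2 M - 3 * C2 (M - (L + 2 * K)) - 3 * C2 (M - 2 * (L + K)) - C2 (M - 3 * L)
      + 6 * C2 (M - (L + 2 * K) - (L + K)) + 6 * C2 (M - 2 * (L + K) - L)
      - 6 * C2 (M - (L + 2 * K) - (L + K) - L) := by
  rcases le_or_gt (3 * L + 3 * K) M with hs | hs
  · exact le_of_eq (key_zero K L M hK hL hs).symm
  rcases le_or_gt (2 * L + 3 * K) M with hd | hd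
  · rcases le_or_gt (3 * L + 2 * K) M with he | he
    · -- (1,1,1,1,1,0)
      have hpos : 0 ≤ 18 * L + 54 * L * L + 18 * K + 108 * K * L + 54 * K * K - 6 * M - 36 * M * L - 36 * M * K + 6 * M * M := by
        nlinarith [mul_nonneg (show (0:ℤ) ≤ (3 * L + 3 * K - 1 - M) by linarith) (show (0:ℤ) ≤ (3 * L + 3 * K - 1 - M) by linarith)]
      have e0 := two_C2_of_nonneg (show (0:ℤ) ≤ M by linarith)
      have ea := two_C2_of_nonneg (show (0:ℤ) ≤ M - (L + 2 * K) by linarith)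
      have eb := two_C2_of_nonneg (show (0:ℤ) ≤ M - 2 * (L + K) by linarith)
      have ec := two_C2_of_nonneg (show (0:ℤ) ≤ M - 3 * L by linarith)
      have ed := two_C2_of_nonneg (show (0:ℤ) ≤ M - (L + 2 * K) - (L + K) by linarith)
      have ee := two_C2_of_nonneg (show (0:ℤ) ≤ M - 2 * (L + K) - L by linarith)
      have es := C2_of_neg (show M - (L + 2 * K) - (L + K) - L < 0 by linarith)
      have hE : 2 * (C2 M - 3 * C2 (M - (L + 2 * K)) - 3 * C2 (M - 2 * (L + K)) - C2 (M - 3 * L)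
      + 6 * C2 (M - (L + 2 * K) - (L + K)) + 6 * C2 (M - 2 * (L + K) - L)
      - 6 * C2 (M - (L + 2 * K) - (L + K) - L)) = 18 * L + 54 * L * L + 18 * K + 108 * K * L + 54 * K * K - 6 * M - 36 * M * L - 36 * M * K + 6 * M * M := by
        linear_combination e0 - 3 * ea - 3 * eb - ec + 6 * ed + 6 * ee - 12 * es
      linarith
    · rcases le_or_gt (3 * L) M with hc | hc
      · -- (1,1,1,1,0,0)
        have hpos : 0 ≤ 6 * K + 36 * K * L + 30 * K * K - 12 * M * K := by
          nlinarith [mul_nonneg (show (0:ℤ) ≤ (M - 3 * L) by linarith) (show (0:ℤ) ≤ (M - 3 * L) by linarith), mul_nonneg (show (0:ℤ) ≤ (M - 3 * L) by linarith) (show (0:ℤ) ≤ (3 * L + 2 * K - 1 - M) by linarith), mul_nonneg (show (0:ℤ) ≤ (3 * L + 2 * K - 1 - M) by linarith) (show (0:ℤ) ≤ (3 * L + 2 * K - 1 - M) by linarith)]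
        have e0 := two_C2_of_nonneg (show (0:ℤ) ≤ M by linarith)
        have ea := two_C2_of_nonneg (show (0:ℤ) ≤ M - (L + 2 * K) by linarith)
        have eb := two_C2_of_nonneg (show (0:ℤ) ≤ M - 2 * (L + K) by linarith)
        have ec := two_C2_of_nonneg (show (0:ℤ) ≤ M - 3 * L by linarith)
        have ed := two_C2_of_nonneg (show (0:ℤ) ≤ M - (L + 2 * K) - (L + K) by linarith)
        have ee := C2_of_neg (show M - 2 * (L + K) - L < 0 by linarith)
        have es := C2_of_neg (show M - (L + 2 * K) - (L + K) - L < 0 by linarith)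
        have hE : 2 * (C2 M - 3 * C2 (M - (L + 2 * K)) - 3 * C2 (M - 2 * (L + K)) - C2 (M - 3 * L)
      + 6 * C2 (M - (L + 2 * K) - (L + K)) + 6 * C2 (M - 2 * (L + K) - L)
      - 6 * C2 (M - (L + 2 * K) - (L + K) - L)) = 6 * K + 36 * K * L + 30 * K * K - 12 * M * K := by
          linear_combination e0 - 3 * ea - 3 * eb - ec + 6 * ed + 12 * ee - 12 * es
        linarith
      · -- (1,1,0,1,0,0)
        have hpos : 0 ≤ 3 * L + 9 * L * L + 6 * K + 36 * K * L + 30 * K * K - M - 6 * M * L - 12 * M * K + M * M := by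
          nlinarith [mul_nonneg (show (0:ℤ) ≤ (3 * L - 1 - M) by linarith) (show (0:ℤ) ≤ (3 * L - 1 - M) by linarith), mul_nonneg (show (0:ℤ) ≤ (3 * L + 2 * K - 1 - M) by linarith) (show (0:ℤ) ≤ (K - 1) by linarith), mul_nonneg (show (0:ℤ) ≤ (3 * L + 3 * K - 1 - M) by linarith) (show (0:ℤ) ≤ (K - 1) by linarith)]
        have e0 := two_C2_of_nonneg (show (0:ℤ) ≤ M by linarith)
        have ea := two_C2_of_nonneg (show (0:ℤ) ≤ M - (L + 2 * K) by linarith)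
        have eb := two_C2_of_nonneg (show (0:ℤ) ≤ M - 2 * (L + K) by linarith)
        have ec := C2_of_neg (show M - 3 * L < 0 by linarith)
        have ed := two_C2_of_nonneg (show (0:ℤ) ≤ M - (L + 2 * K) - (L + K) by linarith)
        have ee := C2_of_neg (show M - 2 * (L + K) - L < 0 by linarith)
        have es := C2_of_neg (show M - (L + 2 * K) - (L + K) - L < 0 by linarith)
        have hE : 2 * (C2 M - 3 * C2 (M - (L + 2 * K)) - 3 * C2 (M - 2 * (L + K)) - C2 (M - 3 * L)
      + 6 * C2 (M - (L + 2 * K) - (L + K)) + 6 * C2 (M - 2 * (L + K) - L)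
      - 6 * C2 (M - (L + 2 * K) - (L + K) - L)) = 3 * L + 9 * L * L + 6 * K + 36 * K * L + 30 * K * K - M - 6 * M * L - 12 * M * K + M * M := by
          linear_combination e0 - 3 * ea - 3 * eb - 2 * ec + 6 * ed + 12 * ee - 12 * es
        linarith
  · rcases le_or_gt (L + 2 * K) M with ha | ha
    · rcases le_or_gt (2 * L + 2 * K) M with hb | hb
      · rcases le_or_gt (3 * L) M with hc | hc
        · rcases le_or_gt (3 * L + 2 * K) M with he | he
          · -- (1,1,1,0,1,0)
            have hpos : 0 ≤ 6 * L + 30 * L * L + 36 * K * L - 12 * M * L := by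
              nlinarith [mul_nonneg (show (0:ℤ) ≤ (2 * L + 3 * K - 1 - M) by linarith) (show (0:ℤ) ≤ (L - 1) by linarith), mul_nonneg (show (0:ℤ) ≤ (3 * L + 3 * K - 1 - M) by linarith) (show (0:ℤ) ≤ (L - 1) by linarith)]
            have e0 := two_C2_of_nonneg (show (0:ℤ) ≤ M by linarith)
            have ea := two_C2_of_nonneg (show (0:ℤ) ≤ M - (L + 2 * K) by linarith)
            have eb := two_C2_of_nonneg (show (0:ℤ) ≤ M - 2 * (L + K) by linarith)
            have ec := two_C2_of_nonneg (show (0:ℤ) ≤ M - 3 * L by linarith)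
            have ed := C2_of_neg (show M - (L + 2 * K) - (L + K) < 0 by linarith)
            have ee := two_C2_of_nonneg (show (0:ℤ) ≤ M - 2 * (L + K) - L by linarith)
            have es := C2_of_neg (show M - (L + 2 * K) - (L + K) - L < 0 by linarith)
            have hE : 2 * (C2 M - 3 * C2 (M - (L + 2 * K)) - 3 * C2 (M - 2 * (L + K)) - C2 (M - 3 * L)
      + 6 * C2 (M - (L + 2 * K) - (L + K)) + 6 * C2 (M - 2 * (L + K) - L)
      - 6 * C2 (M - (L + 2 * K) - (L + K) - L)) = 6 * L + 30 * L * L + 36 * K * L - 12 * M * L := by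
              linear_combination e0 - 3 * ea - 3 * eb - ec + 12 * ed + 6 * ee - 12 * es
            linarith
          · -- (1,1,1,0,0,0)
            have hpos : 0 ≤ -12 * L - 24 * L * L - 12 * K - 36 * K * L - 24 * K * K + 6 * M + 24 * M * L + 24 * M * K - 6 * M * M := by
              nlinarith [mul_nonneg (show (0:ℤ) ≤ (M - (L + 2 * K)) by linarith) (show (0:ℤ) ≤ (2 * L + 3 * K - 1 - M) by linarith), mul_nonneg (show (0:ℤ) ≤ (M - (L + 2 * K)) by linarith) (show (0:ℤ) ≤ (3 * L + 2 * K - 1 - M) by linarith), mul_nonneg (show (0:ℤ) ≤ (M - (2 * L + 2 * K)) by linarith) (show (0:ℤ) ≤ (M - (2 * L + 2 * K)) by linarith), mul_nonneg (show (0:ℤ) ≤ (M - 3 * L) by linarith) (show (0:ℤ) ≤ (3 * L + 2 * K - 1 - M) by linarith)]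
            have e0 := two_C2_of_nonneg (show (0:ℤ) ≤ M by linarith)
            have ea := two_C2_of_nonneg (show (0:ℤ) ≤ M - (L + 2 * K) by linarith)
            have eb := two_C2_of_nonneg (show (0:ℤ) ≤ M - 2 * (L + K) by linarith)
            have ec := two_C2_of_nonneg (show (0:ℤ) ≤ M - 3 * L by linarith)
            have ed := C2_of_neg (show M - (L + 2 * K) - (L + K) < 0 by linarith)
            have ee := C2_of_neg (show M - 2 * (L + K) - L < 0 by linarith)
            have es := C2_of_neg (show M - (L + 2 * K) - (L + K) - L < 0 by linarith)
            have hE : 2 * (C2 M - 3 * C2 (M - (L + 2 * K)) - 3 * C2 (M - 2 * (L + K)) - C2 (M - 3 * L)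
      + 6 * C2 (M - (L + 2 * K) - (L + K)) + 6 * C2 (M - 2 * (L + K) - L)
      - 6 * C2 (M - (L + 2 * K) - (L + K) - L)) = -12 * L - 24 * L * L - 12 * K - 36 * K * L - 24 * K * K + 6 * M + 24 * M * L + 24 * M * K - 6 * M * M := by
              linear_combination e0 - 3 * ea - 3 * eb - ec + 12 * ed + 12 * ee - 12 * es
            linarith
        · -- (1,1,0,0,0,0)
          have hpos : 0 ≤ -9 * L - 15 * L * L - 12 * K - 36 * K * L - 24 * K * K + 5 * M + 18 * M * L + 24 * M * K - 5 * M * M := by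
            nlinarith [mul_nonneg (show (0:ℤ) ≤ (M - (L + 2 * K)) by linarith) (show (0:ℤ) ≤ (M - (2 * L + 2 * K)) by linarith), mul_nonneg (show (0:ℤ) ≤ (M - (L + 2 * K)) by linarith) (show (0:ℤ) ≤ (2 * L + 3 * K - 1 - M) by linarith), mul_nonneg (show (0:ℤ) ≤ (M - (2 * L + 2 * K)) by linarith) (show (0:ℤ) ≤ (M - (2 * L + 2 * K)) by linarith), mul_nonneg (show (0:ℤ) ≤ (M - (2 * L + 2 * K)) by linarith) (show (0:ℤ) ≤ (3 * L - 1 - M) by linarith), mul_nonneg (show (0:ℤ) ≤ (3 * L - 1 - M) by linarith) (show (0:ℤ) ≤ (3 * L - 1 - M) by linarith)]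
          have e0 := two_C2_of_nonneg (show (0:ℤ) ≤ M by linarith)
          have ea := two_C2_of_nonneg (show (0:ℤ) ≤ M - (L + 2 * K) by linarith)
          have eb := two_C2_of_nonneg (show (0:ℤ) ≤ M - 2 * (L + K) by linarith)
          have ec := C2_of_neg (show M - 3 * L < 0 by linarith)
          have ed := C2_of_neg (show M - (L + 2 * K) - (L + K) < 0 by linarith)
          have ee := C2_of_neg (show M - 2 * (L + K) - L < 0 by linarith)
          have es := C2_of_neg (show M - (L + 2 * K) - (L + K) - L < 0 by linarith)
          have hE : 2 * (C2 M - 3 * C2 (M - (L + 2 * K)) - 3 * C2 (M - 2 * (L + K)) - C2 (M - 3 * L)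
      + 6 * C2 (M - (L + 2 * K) - (L + K)) + 6 * C2 (M - 2 * (L + K) - L)
      - 6 * C2 (M - (L + 2 * K) - (L + K) - L)) = -9 * L - 15 * L * L - 12 * K - 36 * K * L - 24 * K * K + 5 * M + 18 * M * L + 24 * M * K - 5 * M * M := by
            linear_combination e0 - 3 * ea - 3 * eb - 2 * ec + 12 * ed + 12 * ee - 12 * es
          linarith
      · rcases le_or_gt (3 * L) M with hc | hc
        · -- (1,0,1,0,0,0)
          have hpos : 0 ≤ -6 * L - 12 * L * L - 6 * K - 12 * K * L - 12 * K * K + 3 * M + 12 * M * L + 12 * M * K - 3 * M * M := by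
            nlinarith [mul_nonneg (show (0:ℤ) ≤ (M - (L + 2 * K)) by linarith) (show (0:ℤ) ≤ (M - (L + 2 * K)) by linarith), mul_nonneg (show (0:ℤ) ≤ (M - (L + 2 * K)) by linarith) (show (0:ℤ) ≤ (M - 3 * L) by linarith), mul_nonneg (show (0:ℤ) ≤ (M - (L + 2 * K)) by linarith) (show (0:ℤ) ≤ (2 * L + 2 * K - 1 - M) by linarith), mul_nonneg (show (0:ℤ) ≤ (M - 3 * L) by linarith) (show (0:ℤ) ≤ (2 * L + 2 * K - 1 - M) by linarith), mul_nonneg (show (0:ℤ) ≤ (2 * L + 2 * K - 1 - M) by linarith) (show (0:ℤ) ≤ (2 * L + 2 * K - 1 - M) by linarith)]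
          have e0 := two_C2_of_nonneg (show (0:ℤ) ≤ M by linarith)
          have ea := two_C2_of_nonneg (show (0:ℤ) ≤ M - (L + 2 * K) by linarith)
          have eb := C2_of_neg (show M - 2 * (L + K) < 0 by linarith)
          have ec := two_C2_of_nonneg (show (0:ℤ) ≤ M - 3 * L by linarith)
          have ed := C2_of_neg (show M - (L + 2 * K) - (L + K) < 0 by linarith)
          have ee := C2_of_neg (show M - 2 * (L + K) - L < 0 by linarith)
          have es := C2_of_neg (show M - (L + 2 * K) - (L + K) - L < 0 by linarith)
          have hE : 2 * (C2 M - 3 * C2 (M - (L + 2 * K)) - 3 * C2 (M - 2 * (L + K)) - C2 (M - 3 * L)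
      + 6 * C2 (M - (L + 2 * K) - (L + K)) + 6 * C2 (M - 2 * (L + K) - L)
      - 6 * C2 (M - (L + 2 * K) - (L + K) - L)) = -6 * L - 12 * L * L - 6 * K - 12 * K * L - 12 * K * K + 3 * M + 12 * M * L + 12 * M * K - 3 * M * M := by
            linear_combination e0 - 3 * ea - 6 * eb - ec + 12 * ed + 12 * ee - 12 * es
          linarith
        · -- (1,0,0,0,0,0)
          have hpos : 0 ≤ -3 * L - 3 * L * L - 6 * K - 12 * K * L - 12 * K * K + 2 * M + 6 * M * L + 12 * M * K - 2 * M * M := by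
            nlinarith [mul_nonneg (show (0:ℤ) ≤ (M - (L + 2 * K)) by linarith) (show (0:ℤ) ≤ (M - (L + 2 * K)) by linarith), mul_nonneg (show (0:ℤ) ≤ (M - (L + 2 * K)) by linarith) (show (0:ℤ) ≤ (2 * L + 3 * K - 1 - M) by linarith), mul_nonneg (show (0:ℤ) ≤ (M - (L + 2 * K)) by linarith) (show (0:ℤ) ≤ (K - 1) by linarith), mul_nonneg (show (0:ℤ) ≤ (2 * L + 2 * K - 1 - M) by linarith) (show (0:ℤ) ≤ (K - 1) by linarith), mul_nonneg (show (0:ℤ) ≤ (3 * L - 1 - M) by linarith) (show (0:ℤ) ≤ (3 * L - 1 - M) by linarith), mul_nonneg (show (0:ℤ) ≤ (2 * L + 3 * K - 1 - M) by linarith) (show (0:ℤ) ≤ (K - 1) by linarith)]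
          have e0 := two_C2_of_nonneg (show (0:ℤ) ≤ M by linarith)
          have ea := two_C2_of_nonneg (show (0:ℤ) ≤ M - (L + 2 * K) by linarith)
          have eb := C2_of_neg (show M - 2 * (L + K) < 0 by linarith)
          have ec := C2_of_neg (show M - 3 * L < 0 by linarith)
          have ed := C2_of_neg (show M - (L + 2 * K) - (L + K) < 0 by linarith)
          have ee := C2_of_neg (show M - 2 * (L + K) - L < 0 by linarith)
          have es := C2_of_neg (show M - (L + 2 * K) - (L + K) - L < 0 by linarith)
          have hE : 2 * (C2 M - 3 * C2 (M - (L + 2 * K)) - 3 * C2 (M - 2 * (L + K)) - C2 (M - 3 * L)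
      + 6 * C2 (M - (L + 2 * K) - (L + K)) + 6 * C2 (M - 2 * (L + K) - L)
      - 6 * C2 (M - (L + 2 * K) - (L + K) - L)) = -3 * L - 3 * L * L - 6 * K - 12 * K * L - 12 * K * K + 2 * M + 6 * M * L + 12 * M * K - 2 * M * M := by
            linear_combination e0 - 3 * ea - 6 * eb - 2 * ec + 12 * ed + 12 * ee - 12 * es
          linarith
    · rcases le_or_gt (3 * L) M with hc | hc
      · -- (0,0,1,0,0,0)
        have hpos : 0 ≤ -3 * L - 9 * L * L + 6 * M * L := by
          nlinarith [mul_nonneg (show (0:ℤ) ≤ (M - 3 * L) by linarith) (show (0:ℤ) ≤ (L - 1) by linarith), mul_nonneg (show (0:ℤ) ≤ (L - 1) by linarith) (show (0:ℤ) ≤ (L - 1) by linarith)]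
        have e0 := two_C2_of_nonneg (show (0:ℤ) ≤ M by linarith)
        have ea := C2_of_neg (show M - (L + 2 * K) < 0 by linarith)
        have eb := C2_of_neg (show M - 2 * (L + K) < 0 by linarith)
        have ec := two_C2_of_nonneg (show (0:ℤ) ≤ M - 3 * L by linarith)
        have ed := C2_of_neg (show M - (L + 2 * K) - (L + K) < 0 by linarith)
        have ee := C2_of_neg (show M - 2 * (L + K) - L < 0 by linarith)
        have es := C2_of_neg (show M - (L + 2 * K) - (L + K) - L < 0 by linarith)
        have hE : 2 * (C2 M - 3 * C2 (M - (L + 2 * K)) - 3 * C2 (M - 2 * (L + K)) - C2 (M - 3 * L)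
      + 6 * C2 (M - (L + 2 * K) - (L + K)) + 6 * C2 (M - 2 * (L + K) - L)
      - 6 * C2 (M - (L + 2 * K) - (L + K) - L)) = -3 * L - 9 * L * L + 6 * M * L := by
          linear_combination e0 - 6 * ea - 6 * eb - ec + 12 * ed + 12 * ee - 12 * es
        linarith
      · -- (0,0,0,0,0,0)
        have hpos : 0 ≤ -M + M * M := by
          nlinarith [mul_nonneg (show (0:ℤ) ≤ (M - 2) by linarith) (show (0:ℤ) ≤ (M - 2) by linarith)]
        have e0 := two_C2_of_nonneg (show (0:ℤ) ≤ M by linarith)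
        have ea := C2_of_neg (show M - (L + 2 * K) < 0 by linarith)
        have eb := C2_of_neg (show M - 2 * (L + K) < 0 by linarith)
        have ec := C2_of_neg (show M - 3 * L < 0 by linarith)
        have ed := C2_of_neg (show M - (L + 2 * K) - (L + K) < 0 by linarith)
        have ee := C2_of_neg (show M - 2 * (L + K) - L < 0 by linarith)
        have es := C2_of_neg (show M - (L + 2 * K) - (L + K) - L < 0 by linarith)
        have hE : 2 * (C2 M - 3 * C2 (M - (L + 2 * K)) - 3 * C2 (M - 2 * (L + K)) - C2 (M - 3 * L)
      + 6 * C2 (M - (L + 2 * K) - (L + K)) + 6 * C2 (M - 2 * (L + K) - L)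
      - 6 * C2 (M - (L + 2 * K) - (L + K) - L)) = -M + M * M := by
          linear_combination e0 - 6 * ea - 6 * eb - 2 * ec + 12 * ed + 12 * ee - 12 * es
        linarith

theorem linear_hilbert_series
    (k l : ℕ) (hk : 0 < k) (hl : 0 < l)
    (φ1 φ2 φ3 : ℕ)
    (hφ1 : φ1 = l + 2 * k) (hφ2 : φ2 = l + k) (hφ3 : φ3 = l)
    (h : ℕ → ℤ)
    (hh : ∀ j : ℕ, h j =
      C2 ((j : ℤ) + 2) - 3 * C2 ((j : ℤ) + 2 - φ1) - 3 * C2 ((j : ℤ) + 2 - 2 * φ2)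
        - C2 ((j : ℤ) + 2 - 3 * φ3)
        + 6 * C2 ((j : ℤ) + 2 - φ1 - φ2) + 6 * C2 ((j : ℤ) + 2 - 2 * φ2 - φ3)
        - 6 * C2 ((j : ℤ) + 2 - φ1 - φ2 - φ3)) :
    (∀ j : ℕ, 0 ≤ h j) ∧
    (∀ j : ℕ, φ1 + φ2 + φ3 - 2 ≤ j → h j = 0) ∧
    (PowerSeries.mk (fun j => h j)) * (1 - (X : PowerSeries ℤ)) ^ 3 =
      1 - 3 * X ^ φ1 - 3 * X ^ (2 * φ2) - X ^ (3 * φ3)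
        + 6 * X ^ (φ1 + φ2) + 6 * X ^ (2 * φ2 + φ3)
        - 6 * X ^ (φ1 + φ2 + φ3) := by
  rw [hφ1, hφ2, hφ3] at hh ⊢
  refine ⟨?_, ?_, ?_⟩
  · intro j
    rw [hh j]
    push_cast
    have hM : (2:ℤ) ≤ (j : ℤ) + 2 := by omega
    have := key_nonneg (k : ℤ) (l : ℤ) ((j : ℤ) + 2)
      (by exact_mod_cast hk) (by exact_mod_cast hl) hM
    linarith
  · intro j hj
    rw [hh j]
    push_cast
    have hM : 3 * (l : ℤ) + 3 * (k : ℤ) ≤ (j : ℤ) + 2 := by omega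
    have := key_zero (k : ℤ) (l : ℤ) ((j : ℤ) + 2)
      (by exact_mod_cast hk) (by exact_mod_cast hl) hM
    linarith
  · have c3 : ∀ (f : PowerSeries ℤ) (n : ℕ),
        (coeff n) (3 * f) = 3 * coeff n f := by
      intro f n
      rw [show (3 : PowerSeries ℤ) = C (3 : ℤ) from (map_ofNat (C (R := ℤ)) 3).symm, coeff_C_mul]
    have c6 : ∀ (f : PowerSeries ℤ) (n : ℕ),
        (coeff n) (6 * f) = 6 * coeff n f := by
      intro f n
      rw [show (6 : PowerSeries ℤ) = C (6 : ℤ) from (map_ofNat (C (R := ℤ)) 6).symm, coeff_C_mul]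
    have hmk : (PowerSeries.mk (fun j => h j)) =
        (mk fun j : ℕ => C2 ((j : ℤ) + 2 - (0 : ℕ)))
        - 3 * (mk fun j : ℕ => C2 ((j : ℤ) + 2 - (l + 2 * k : ℕ)))
        - 3 * (mk fun j : ℕ => C2 ((j : ℤ) + 2 - (2 * (l + k) : ℕ)))
        - (mk fun j : ℕ => C2 ((j : ℤ) + 2 - (3 * l : ℕ)))
        + 6 * (mk fun j : ℕ => C2 ((j : ℤ) + 2 - ((l + 2 * k) + (l + k) : ℕ)))
        + 6 * (mk fun j : ℕ => C2 ((j : ℤ) + 2 - (2 * (l + k) + l : ℕ)))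
        - 6 * (mk fun j : ℕ => C2 ((j : ℤ) + 2 - ((l + 2 * k) + (l + k) + l : ℕ))) := by
      ext j
      simp only [map_sub, map_add, c3, c6, coeff_mk, hh j]
      push_cast
      ring_nf
    rw [hmk]
    have expand : ∀ A B Cc D E F G : PowerSeries ℤ,
        (A - 3 * B - 3 * Cc - D + 6 * E + 6 * F - 6 * G) * (1 - X) ^ 3
        = A * (1 - X) ^ 3 - 3 * (B * (1 - X) ^ 3) - 3 * (Cc * (1 - X) ^ 3)
          - D * (1 - X) ^ 3 + 6 * (E * (1 - X) ^ 3) + 6 * (F * (1 - X) ^ 3)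
          - 6 * (G * (1 - X) ^ 3) := by intros; ring
    rw [expand, G_mul, G_mul, G_mul, G_mul, G_mul, G_mul, G_mul, pow_zero]
end
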